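/- Let g : ℝⁿ → ℝ be twice continuously differentiable with gradient ∇g and Hessian H(x) = fderiv (∇g)(x). Suppose there are constants 0 < m such that m‖z‖² ≤ ⟪H(y) z, z⟫ for all y, z (so H(y) is invertible for every y), and that the Hessian map is Lipschitz with constant L₀ ≥ 0. Let x be any point, Δ = −(H(x))⁻¹(∇g(x)) the Newton step at x, and Δ⁺ = −(H(x+Δ))⁻¹(∇g(x+Δ)) the Newton step at x + Δ. Then ‖Δ⁺‖ ≤ (L₀/(2m))‖Δ‖². -/

import Mathlib

open scoped RealInnerProductSpace

set_option maxHeartbeats 1000000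
set_option synthInstance.maxHeartbeats 200000

/-- For a `C²` function with uniformly positive definite Hessian and `L₀`-Lipschitz
Hessian, successive Newton steps satisfy `‖Δ⁺‖ ≤ (L₀/(2m))‖Δ‖²`. -/
theorem newton_successive_steps_quadratic (n : ℕ)
    (g : EuclideanSpace ℝ (Fin n) → ℝ) (hg : ContDiff ℝ 2 g)
    (m : ℝ) (hm : 0 < m)
    (hpos : ∀ y z : EuclideanSpace ℝ (Fin n),
      m * ‖z‖ ^ 2 ≤ ⟪fderiv ℝ (gradient g) y z, z⟫)
    (L₀ : ℝ) (hL₀ : 0 ≤ L₀)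
    (hLip : ∀ x₁ x₂ : EuclideanSpace ℝ (Fin n),
      ‖fderiv ℝ (gradient g) x₁ - fderiv ℝ (gradient g) x₂‖ ≤ L₀ * ‖x₁ - x₂‖)
    (x Δ Δ' : EuclideanSpace ℝ (Fin n))
    (hΔ : fderiv ℝ (gradient g) x Δ = -gradient g x)
    (hΔ' : fderiv ℝ (gradient g) (x + Δ) Δ' = -gradient g (x + Δ)) :
    ‖Δ'‖ ≤ L₀ / (2 * m) * ‖Δ‖ ^ 2 := by
  set H : EuclideanSpace ℝ (Fin n) → EuclideanSpace ℝ (Fin n) →L[ℝ] EuclideanSpace ℝ (Fin n) :=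
    fun y => fderiv ℝ (gradient g) y with hHdef
  -- gradient g is C¹
  have hgrad : ContDiff ℝ 1 (gradient g) := by
    have hfd : ContDiff ℝ 1 (fderiv ℝ g) := hg.fderiv_right (by norm_num)
    have : gradient g = fun y =>
        (InnerProductSpace.toDual ℝ (EuclideanSpace ℝ (Fin n))).symm (fderiv ℝ g y) := rfl
    rw [this]
    exact (InnerProductSpace.toDual ℝ (EuclideanSpace ℝ (Fin n))).symm.contDiff.comp hfd
  have hdiff : Differentiable ℝ (gradient g) := hgrad.differentiable one_ne_zero
  -- derivative of t ↦ ∇g(x + tΔ)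
  have hf : ∀ t : ℝ, HasDerivAt (fun t : ℝ => gradient g (x + t • Δ)) (H (x + t • Δ) Δ) t := by
    intro t
    have h1 : HasFDerivAt (gradient g) (H (x + t • Δ)) (x + t • Δ) :=
      (hdiff _).hasFDerivAt
    have h2 : HasDerivAt (fun t : ℝ => x + t • Δ) Δ t := by
      simpa using ((hasDerivAt_id t).smul_const Δ).const_add x
    exact h1.comp_hasDerivAt t h2
  -- continuity of t ↦ H(x+tΔ)Δ
  have hHcont : Continuous H := by
    have : LipschitzWith (Real.toNNReal L₀) H := by
      apply LipschitzWith.of_dist_le_mul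
      intro a b
      simpa [dist_eq_norm, Real.coe_toNNReal L₀ hL₀] using hLip a b
    exact this.continuous
  have hcont : Continuous (fun t : ℝ => H (x + t • Δ) Δ) := by
    exact ((hHcont.comp (by continuity)).clm_apply continuous_const)
  -- FTC
  have hFTC : ∫ t in (0:ℝ)..1, H (x + t • Δ) Δ =
      gradient g (x + (1:ℝ) • Δ) - gradient g (x + (0:ℝ) • Δ) :=
    intervalIntegral.integral_eq_sub_of_hasDerivAt (fun t _ => hf t)
      (hcont.intervalIntegrable 0 1)
  have hFTC' : ∫ t in (0:ℝ)..1, H (x + t • Δ) Δ = gradient g (x + Δ) - gradient g x := by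
    simpa using hFTC
  -- remainder bound
  have hkey : ‖gradient g (x + Δ)‖ ≤ L₀ / 2 * ‖Δ‖ ^ 2 := by
    have hsplit : gradient g (x + Δ) =
        ∫ t in (0:ℝ)..1, (H (x + t • Δ) Δ - H x Δ) := by
      rw [intervalIntegral.integral_sub (hcont.intervalIntegrable 0 1)
        intervalIntegrable_const, hFTC']
      have hΔH : H x Δ = -gradient g x := hΔ
      simp [hΔH]
    rw [hsplit]
    have hb : ∀ t ∈ Set.Icc (0:ℝ) 1, ‖H (x + t • Δ) Δ - H x Δ‖ ≤ L₀ * ‖Δ‖ ^ 2 * t := by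
      intro t ht
      have h1 : ‖H (x + t • Δ) Δ - H x Δ‖ ≤ ‖H (x + t • Δ) - H x‖ * ‖Δ‖ := by
        simpa using (H (x + t • Δ) - H x).le_opNorm Δ
      have h2 : ‖H (x + t • Δ) - H x‖ ≤ L₀ * (t * ‖Δ‖) := by
        have := hLip (x + t • Δ) x
        simpa [norm_smul, abs_of_nonneg ht.1] using this
      calc ‖H (x + t • Δ) Δ - H x Δ‖ ≤ ‖H (x + t • Δ) - H x‖ * ‖Δ‖ := h1
        _ ≤ L₀ * (t * ‖Δ‖) * ‖Δ‖ :=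
          mul_le_mul_of_nonneg_right h2 (norm_nonneg _)
        _ = L₀ * ‖Δ‖ ^ 2 * t := by ring
    have hint : IntervalIntegrable (fun t : ℝ => L₀ * ‖Δ‖ ^ 2 * t) MeasureTheory.volume 0 1 :=
      (continuous_const.mul continuous_id).intervalIntegrable 0 1
    calc ‖∫ t in (0:ℝ)..1, (H (x + t • Δ) Δ - H x Δ)‖
        ≤ |∫ t in (0:ℝ)..1, L₀ * ‖Δ‖ ^ 2 * t| := by
          apply intervalIntegral.norm_integral_le_abs_of_norm_le _ hint
          filter_upwards [MeasureTheory.ae_restrict_mem measurableSet_Ioc] with t ht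
          exact hb t ⟨le_of_lt (by simpa using ht.1), by simpa using ht.2⟩
      _ = ∫ t in (0:ℝ)..1, L₀ * ‖Δ‖ ^ 2 * t :=
          abs_of_nonneg (intervalIntegral.integral_nonneg zero_le_one
            (fun t ht => mul_nonneg (by positivity) ht.1))
      _ = L₀ / 2 * ‖Δ‖ ^ 2 := by
          rw [intervalIntegral.integral_const_mul, integral_id]
          ring
  -- positive definiteness step
  have hcs : m * ‖Δ'‖ ^ 2 ≤ ‖gradient g (x + Δ)‖ * ‖Δ'‖ := by
    calc m * ‖Δ'‖ ^ 2 ≤ ⟪H (x + Δ) Δ', Δ'⟫ := hpos (x + Δ) Δ'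
      _ = ⟪-gradient g (x + Δ), Δ'⟫ := by rw [hΔ']
      _ ≤ ‖-gradient g (x + Δ)‖ * ‖Δ'‖ := real_inner_le_norm _ _
      _ = ‖gradient g (x + Δ)‖ * ‖Δ'‖ := by rw [norm_neg]
  rcases eq_or_ne Δ' 0 with h0 | h0
  · simp [h0]
    positivity
  · have hΔ'pos : 0 < ‖Δ'‖ := norm_pos_iff.mpr h0
    have h1 : m * ‖Δ'‖ ≤ ‖gradient g (x + Δ)‖ := by
      have := hcs
      nlinarith
    have h2 : m * ‖Δ'‖ ≤ L₀ / 2 * ‖Δ‖ ^ 2 := h1.trans hkey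
    rw [div_mul_eq_mul_div, le_div_iff₀ (by positivity)]
    nlinarith
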